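/- Assume the quotients $\bar a_j\bar r_j^{-1}$ are bounded and let $0<t<p\le 2$. Then every $x$ with $\|x\|_{k_t}<\infty$ lies in $\ell^p_{\omega_p}$, and there is a constant $M>0$ depending only on $t$, $p$ and $\sup_j \bar a_j\bar r_j^{-1}$ such that $\|x\|_{\omega_p,p}\le M\|x\|_{k_t}$ for all $x$. -/

import Mathlib

open scoped ENNReal
noncomputable section

variable {Λ : Type*}

/-- Weighted `ℓ^p` quasi-norm (value in `ℝ≥0∞`). -/
def wnorm (ω : Λ → ℝ) (p : ℝ) (x : Λ → ℝ) : ℝ≥0∞ :=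
  (∑' j, ENNReal.ofReal (ω j ^ p * |x j| ^ p)) ^ (1 / p)

/-- The interpolating weights `(ω_t)_j = (a_j^{2t-2} r_j^{2-t})^{1/t}`. -/
def omegaWeight (a r : Λ → ℝ) (t : ℝ) : Λ → ℝ :=
  fun j => (a j ^ (2 * t - 2) * r j ^ (2 - t)) ^ (1 / t)

/-- Weighted `ℓ¹` norm `‖x‖_{r,1} = ∑ r_j |x_j|`. -/
def rnorm1 (r : Λ → ℝ) (x : Λ → ℝ) : ℝ≥0∞ := ∑' j, ENNReal.ofReal (r j * |x j|)

/-- Weighted `ℓ²` norm `‖x‖_{a,2} = (∑ a_j² x_j²)^{1/2}`. -/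
def anorm2 (a : Λ → ℝ) (x : Λ → ℝ) : ℝ≥0∞ :=
  (∑' j, ENNReal.ofReal (a j ^ 2 * x j ^ 2)) ^ ((1 : ℝ) / 2)

/-- The sum `∑_j a_j⁻² r_j² 𝟙_{a_j⁻² r_j α < |x_j|}`. -/
def kSum (a r : Λ → ℝ) (α : ℝ) (x : Λ → ℝ) : ℝ≥0∞ :=
  ∑' j, ENNReal.ofReal (if r j * α / a j ^ 2 < |x j| then r j ^ 2 / a j ^ 2 else 0)

/-- The weak quasi-norm `‖x‖_{k_t} = sup_{α>0} α (kSum α x)^{1/t}`. -/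
def knorm (a r : Λ → ℝ) (t : ℝ) (x : Λ → ℝ) : ℝ≥0∞ :=
  ⨆ α ∈ Set.Ioi (0 : ℝ), ENNReal.ofReal α * (kSum a r α x) ^ (1 / t)

/-- Hard thresholding operator. -/
def Tthresh (a r : Λ → ℝ) (α : ℝ) (x : Λ → ℝ) : Λ → ℝ :=
  fun j => if r j * α / a j ^ 2 < |x j| then x j else 0

theorem stmt4 (a r : Λ → ℝ) (ha : ∀ j, 0 < a j) (hr : ∀ j, 0 < r j)
    (t p : ℝ) (ht : 0 < t) (htp : t < p) (hp : p ≤ 2)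
    (hbd : ∃ C : ℝ, ∀ j, a j / r j ≤ C) :
    ∃ M > (0:ℝ), ∀ x : Λ → ℝ,
      wnorm (omegaWeight a r p) p x ≤ ENNReal.ofReal M * knorm a r t x := by
  obtain ⟨C, hC⟩ := hbd
  have hp0 : 0 < p := ht.trans htp
  set c : ℝ := max C 1 with hc_def
  have hc1 : (1:ℝ) ≤ c := le_max_right _ _
  have hc0 : (0:ℝ) < c := lt_of_lt_of_le one_pos hc1
  have hca : ∀ j, a j ≤ c * r j := by
    intro j
    have h1 : a j / r j ≤ c := (hC j).trans (le_max_left _ _)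
    calc a j = (a j / r j) * r j := (div_mul_cancel₀ _ (hr j).ne').symm
    _ ≤ c * r j := mul_le_mul_of_nonneg_right h1 (hr j).le
  -- the geometric ratio
  set q : ℝ := (2:ℝ) ^ (t - p) with hq_def
  have hq0 : 0 < q := Real.rpow_pos_of_pos (by norm_num) _
  have hq1 : q < 1 := Real.rpow_lt_one_of_one_lt_of_neg (by norm_num) (by linarith)
  -- the constant
  set D : ℝ := c ^ (2 * (p - t) / t) * (2:ℝ) ^ t * (1 - q)⁻¹ with hD_def
  have hD0 : 0 < D := by
    have h1 : 0 < c ^ (2 * (p - t) / t) := Real.rpow_pos_of_pos hc0 _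
    have h2 : 0 < (2:ℝ) ^ t := Real.rpow_pos_of_pos (by norm_num) _
    have h3 : 0 < (1 - q)⁻¹ := inv_pos.2 (by linarith)
    positivity
  refine ⟨D ^ (1/p), Real.rpow_pos_of_pos hD0 _, ?_⟩
  intro x
  set M : ℝ := D ^ (1/p) with hM_def
  have hM0 : 0 < M := Real.rpow_pos_of_pos hD0 _
  by_cases hK : knorm a r t x = ⊤
  · rw [hK, ENNReal.mul_top (ENNReal.ofReal_pos.2 hM0).ne']
    exact le_top
  -- K finite
  set K := knorm a r t x with hK_def
  set Kr : ℝ := K.toReal with hKr_def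
  have hKr0 : 0 ≤ Kr := ENNReal.toReal_nonneg
  have hKK : ENNReal.ofReal Kr = K := ENNReal.ofReal_toReal hK
  set y : Λ → ℝ := fun j => |x j| * a j ^ 2 / r j with hy_def
  set μ : Λ → ℝ := fun j => r j ^ 2 / a j ^ 2 with hmu_def
  have hy0 : ∀ j, 0 ≤ y j := fun j =>
    div_nonneg (mul_nonneg (abs_nonneg _) (sq_nonneg _)) (hr j).le
  have hmu0 : ∀ j, 0 < μ j := fun j => div_pos (pow_pos (hr j) 2) (pow_pos (ha j) 2)
  have hmuc : ∀ j, (c ^ 2)⁻¹ ≤ μ j := by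
    intro j
    have h2 : a j ^ 2 ≤ c ^ 2 * r j ^ 2 := by nlinarith [ha j, hr j, hc0, hca j]
    have hcc : (0:ℝ) < c ^ 2 := by positivity
    rw [hmu_def]
    rw [le_div_iff₀ (pow_pos (ha j) 2), inv_mul_le_iff₀ hcc]
    exact h2
  have hcond : ∀ (α : ℝ) (j : Λ), (r j * α / a j ^ 2 < |x j|) ↔ α < y j := by
    intro α j
    rw [hy_def]
    rw [div_lt_iff₀ (pow_pos (ha j) 2), lt_div_iff₀ (hr j), mul_comm (r j) α]
  have hkb : ∀ α : ℝ, 0 < α → kSum a r α x ≤ ENNReal.ofReal ((Kr / α) ^ t) := by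
    intro α hα
    have h1 : ENNReal.ofReal α * (kSum a r α x) ^ (1/t) ≤ K := by
      rw [hK_def, knorm]
      exact le_iSup₂ (f := fun (β:ℝ) (_ : β ∈ Set.Ioi (0:ℝ)) =>
        ENNReal.ofReal β * (kSum a r β x) ^ (1/t)) α (Set.mem_Ioi.2 hα)
    have h2 : (kSum a r α x) ^ (1/t) ≤ ENNReal.ofReal (Kr / α) := by
      rw [ENNReal.ofReal_div_of_pos hα, hKK]
      exact (ENNReal.le_div_iff_mul_le (Or.inl (ENNReal.ofReal_pos.2 hα).ne')
        (Or.inl ENNReal.ofReal_ne_top)).2 (by rwa [mul_comm])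
    calc kSum a r α x = ((kSum a r α x) ^ (1/t)) ^ t := by
          rw [← ENNReal.rpow_mul, one_div, inv_mul_cancel₀ ht.ne', ENNReal.rpow_one]
    _ ≤ (ENNReal.ofReal (Kr / α)) ^ t := ENNReal.rpow_le_rpow h2 ht.le
    _ = ENNReal.ofReal ((Kr / α) ^ t) :=
        ENNReal.ofReal_rpow_of_nonneg (div_nonneg hKr0 hα.le) ht.le
  set A : ℝ := Kr * c ^ ((2:ℝ)/t) with hA_def
  have hcp : (0:ℝ) < c ^ ((2:ℝ)/t) := Real.rpow_pos_of_pos hc0 _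
  have hA0' : 0 ≤ A := mul_nonneg hKr0 hcp.le
  have hybd : ∀ j, y j ≤ A := by
    intro j
    by_contra hcon
    push_neg at hcon
    set α := (A + y j)/2 with hα_def
    have hαA : A < α := by rw [hα_def]; linarith
    have hαy : α < y j := by rw [hα_def]; linarith
    have hα0 : 0 < α := lt_of_le_of_lt hA0' hαA
    have h1 : ENNReal.ofReal (μ j) ≤ kSum a r α x := by
      have h := ENNReal.le_tsum (f := fun i =>
        ENNReal.ofReal (if r i * α / a i ^ 2 < |x i| then r i ^ 2 / a i ^ 2 else 0)) j
      rw [if_pos ((hcond α j).2 hαy)] at h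
      exact h
    have h2 := h1.trans (hkb α hα0)
    rw [ENNReal.ofReal_le_ofReal_iff (by positivity)] at h2
    have h3 : ((c ^ 2)⁻¹ : ℝ) ≤ (Kr/α) ^ t := le_trans (hmuc j) h2
    have h4 : (((c ^ 2)⁻¹ : ℝ)) ^ ((1:ℝ)/t) ≤ Kr / α := by
      calc (((c ^ 2)⁻¹ : ℝ)) ^ ((1:ℝ)/t) ≤ ((Kr/α) ^ t) ^ ((1:ℝ)/t) :=
            Real.rpow_le_rpow (by positivity) h3 (by positivity)
      _ = Kr / α := by
            rw [← Real.rpow_mul (div_nonneg hKr0 hα0.le), mul_one_div,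
              div_self ht.ne', Real.rpow_one]
    have h5 : (((c ^ 2)⁻¹ : ℝ)) ^ ((1:ℝ)/t) = (c ^ ((2:ℝ)/t))⁻¹ := by
      rw [Real.inv_rpow (by positivity), ← Real.rpow_natCast c 2,
        ← Real.rpow_mul hc0.le]
      norm_num
      rw [div_eq_mul_inv]
    rw [h5] at h4
    have h6 : α ≤ A := by
      rw [le_div_iff₀ hα0] at h4
      rw [hA_def]
      calc α = c ^ ((2:ℝ)/t) * ((c ^ ((2:ℝ)/t))⁻¹ * α) := by field_simp
      _ ≤ c ^ ((2:ℝ)/t) * Kr := mul_le_mul_of_nonneg_left h4 hcp.le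
      _ = Kr * c ^ ((2:ℝ)/t) := mul_comm _ _
    linarith
  by_cases hKr : Kr = 0
  · have hx0 : ∀ j, x j = 0 := by
      intro j
      have hA00 : A = 0 := by rw [hA_def, hKr, zero_mul]
      have h1 := hybd j
      rw [hA00] at h1
      have h2 : y j = 0 := le_antisymm h1 (hy0 j)
      simp only [hy_def] at h2
      rw [div_eq_zero_iff] at h2
      rcases h2 with h2 | h2
      swap
      · exact absurd h2 (hr j).ne'
      rcases mul_eq_zero.1 h2 with h | h
      · exact abs_eq_zero.1 h
      · exact absurd h (pow_ne_zero 2 (ha j).ne')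
    have hw0 : wnorm (omegaWeight a r p) p x = 0 := by
      have hz : ∀ j, ENNReal.ofReal (omegaWeight a r p j ^ p * |x j| ^ p) = 0 := by
        intro j; rw [hx0 j]; simp [Real.zero_rpow hp0.ne']
      rw [show wnorm (omegaWeight a r p) p x
        = (∑' j, ENNReal.ofReal (omegaWeight a r p j ^ p * |x j| ^ p)) ^ (1/p) from rfl]
      rw [tsum_congr hz, tsum_zero, ENNReal.zero_rpow_of_pos (by positivity)]
    rw [hw0]; exact zero_le
  have hKrpos : 0 < Kr := hKr0.lt_of_ne' hKr
  have hA0 : 0 < A := mul_pos hKrpos hcp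
  set F : Λ → ℕ → ℝ≥0∞ := fun j k =>
    ENNReal.ofReal (if A * 2 ^ (-(k:ℝ)-1) < y j then μ j * (A * 2 ^ (-(k:ℝ))) ^ p else 0)
    with hF_def
  have hident : ∀ j, omegaWeight a r p j ^ p * |x j| ^ p = μ j * y j ^ p := by
    intro j
    have haj := ha j
    have hrj := hr j
    have e2 : a j ^ ((2:ℝ)) = a j ^ (2:ℕ) := by
      rw [← Real.rpow_natCast (a j) 2]; norm_num
    have e2r : r j ^ ((2:ℝ)) = r j ^ (2:ℕ) := by
      rw [← Real.rpow_natCast (r j) 2]; norm_num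
    have h1 : omegaWeight a r p j ^ p = a j ^ (2*p-2) * r j ^ (2-p) := by
      rw [omegaWeight, ← Real.rpow_mul (by positivity), one_div,
        inv_mul_cancel₀ hp0.ne', Real.rpow_one]
    have h2 : y j ^ p = |x j| ^ p * a j ^ (2*p) / r j ^ p := by
      simp only [hy_def]
      rw [Real.div_rpow (by positivity) hrj.le,
        Real.mul_rpow (abs_nonneg _) (by positivity),
        ← Real.rpow_natCast (a j) 2, ← Real.rpow_mul haj.le]
      norm_num
    have h3 : a j ^ (2*p-2) = a j ^ (2*p) / a j ^ (2:ℕ) := by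
      rw [Real.rpow_sub haj, e2]
    have h4 : r j ^ ((2:ℝ)-p) = r j ^ (2:ℕ) / r j ^ p := by
      rw [Real.rpow_sub hrj, e2r]
    rw [h1, h2, h3, h4]
    simp only [hmu_def]
    have hne2 : r j ^ p ≠ 0 := (Real.rpow_pos_of_pos hrj p).ne'
    field_simp
  have hstep1 : ∀ j, ENNReal.ofReal (omegaWeight a r p j ^ p * |x j| ^ p) ≤ ∑' k, F j k := by
    intro j
    rw [hident j]
    rcases eq_or_lt_of_le (hy0 j) with h0 | hyj
    · rw [← h0]
      simp [Real.zero_rpow hp0.ne']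
    · have hex : ∃ k : ℕ, A * 2 ^ (-(k:ℝ)-1) < y j := by
        obtain ⟨n, hn⟩ := exists_nat_gt (A / y j)
        refine ⟨n, ?_⟩
        have h2n : ((n:ℝ)+1) ≤ (2:ℝ) ^ ((n:ℝ)+1) := by
          rw [show ((n:ℝ)+1) = ((n+1:ℕ):ℝ) by push_cast; ring, Real.rpow_natCast]
          exact_mod_cast (Nat.lt_two_pow_self (n := n+1)).le
        have hAyn : A < y j * ((n:ℝ)+1) := by
          rw [div_lt_iff₀ hyj] at hn
          nlinarith [hyj]
        have hA2 : A < y j * (2:ℝ) ^ ((n:ℝ)+1) := by nlinarith [hyj, h2n]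
        rw [show (-(n:ℝ)-1) = -((n:ℝ)+1) by ring, Real.rpow_neg (by norm_num : (0:ℝ) ≤ 2),
          mul_inv_lt_iff₀ (Real.rpow_pos_of_pos (by norm_num) _)]
        exact hA2
      obtain ⟨k, hk1, hk2⟩ : ∃ k : ℕ, A * 2 ^ (-(k:ℝ)-1) < y j ∧ y j ≤ A * 2 ^ (-(k:ℝ)) := by
        refine ⟨Nat.find hex, Nat.find_spec hex, ?_⟩
        rcases Nat.eq_zero_or_pos (Nat.find hex) with h0 | hpos
        · rw [h0]
          simpa using hybd j
        · have hm := Nat.find_min hex (Nat.pred_lt hpos.ne')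
          push_neg at hm
          have hcast : ((Nat.find hex - 1 : ℕ):ℝ) = (Nat.find hex : ℝ) - 1 :=
            Nat.cast_pred hpos
          calc y j ≤ A * 2 ^ (-((Nat.find hex - 1:ℕ):ℝ)-1) := hm
          _ = A * 2 ^ (-(Nat.find hex:ℝ)) := by
                rw [hcast]; congr 1; congr 1; ring
      calc ENNReal.ofReal (μ j * y j ^ p) ≤ F j k := by
            simp only [hF_def]
            rw [if_pos hk1]
            exact ENNReal.ofReal_le_ofReal (mul_le_mul_of_nonneg_left
              (Real.rpow_le_rpow (hy0 j) hk2 hp0.le) (hmu0 j).le)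
      _ ≤ ∑' k, F j k := ENNReal.le_tsum k
  have hgeom : ∀ k : ℕ, (A * 2 ^ (-(k:ℝ))) ^ p * (Kr / (A * 2 ^ (-(k:ℝ)-1))) ^ t
      = (Kr ^ p * (c ^ (2*(p-t)/t) * (2:ℝ) ^ t)) * q ^ k := by
    intro k
    have h2k : (0:ℝ) < (2:ℝ) ^ ((k:ℝ)+1) := Real.rpow_pos_of_pos (by norm_num) _
    have hstep : Kr / (A * 2 ^ (-(k:ℝ)-1)) = (c ^ ((2:ℝ)/t))⁻¹ * 2 ^ ((k:ℝ)+1) := by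
      rw [hA_def, show (-(k:ℝ)-1) = -((k:ℝ)+1) by ring,
        Real.rpow_neg (by norm_num : (0:ℝ) ≤ 2)]
      field_simp
    calc (A * 2 ^ (-(k:ℝ))) ^ p * (Kr / (A * 2 ^ (-(k:ℝ)-1))) ^ t
        = Kr ^ p * c ^ ((2:ℝ)/t*p - 2/t*t) * 2 ^ (-(k:ℝ)*p + ((k:ℝ)+1)*t) := by
          rw [hstep, hA_def]
          rw [Real.mul_rpow (mul_nonneg hKr0 hcp.le) (Real.rpow_nonneg (by norm_num) _)]
          rw [Real.mul_rpow hKr0 hcp.le]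
          rw [Real.mul_rpow (inv_nonneg.2 hcp.le) h2k.le]
          rw [Real.inv_rpow hcp.le]
          rw [← Real.rpow_mul hc0.le, ← Real.rpow_mul hc0.le,
            ← Real.rpow_mul (by norm_num : (0:ℝ) ≤ 2),
            ← Real.rpow_mul (by norm_num : (0:ℝ) ≤ 2)]
          rw [Real.rpow_sub hc0, Real.rpow_add (by norm_num : (0:ℝ) < 2)]
          rw [div_eq_mul_inv]
          ring
    _ = (Kr ^ p * (c ^ (2*(p-t)/t) * (2:ℝ) ^ t)) * q ^ k := by
          rw [hq_def, ← Real.rpow_natCast ((2:ℝ) ^ (t-p)) k,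
            ← Real.rpow_mul (by norm_num : (0:ℝ) ≤ 2)]
          rw [show (2:ℝ)/t*p - 2/t*t = 2*(p-t)/t by field_simp]
          rw [show -(k:ℝ)*p + ((k:ℝ)+1)*t = t + (t-p)*(k:ℝ) by ring]
          rw [Real.rpow_add (by norm_num : (0:ℝ) < 2)]
          ring
  have hstep3 : ∀ k : ℕ, (∑' j, F j k)
      ≤ ENNReal.ofReal (Kr ^ p * (c ^ (2*(p-t)/t) * (2:ℝ) ^ t)) * (ENNReal.ofReal q) ^ k := by
    intro k
    have hak : (0:ℝ) < A * 2 ^ (-(k:ℝ)-1) :=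
      mul_pos hA0 (Real.rpow_pos_of_pos (by norm_num) _)
    have hcap : (0:ℝ) ≤ (A * 2 ^ (-(k:ℝ))) ^ p :=
      Real.rpow_nonneg (mul_nonneg hA0.le (Real.rpow_nonneg (by norm_num) _)) _
    calc ∑' j, F j k
        = kSum a r (A * 2 ^ (-(k:ℝ)-1)) x * ENNReal.ofReal ((A * 2 ^ (-(k:ℝ))) ^ p) := by
          rw [show kSum a r (A * 2 ^ (-(k:ℝ)-1)) x = ∑' j, ENNReal.ofReal
            (if r j * (A * 2 ^ (-(k:ℝ)-1)) / a j ^ 2 < |x j| then r j ^ 2 / a j ^ 2 else 0)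
            from rfl, ← ENNReal.tsum_mul_right]
          refine tsum_congr fun j => ?_
          simp only [hF_def]
          by_cases hj : A * 2 ^ (-(k:ℝ)-1) < y j
          · rw [if_pos hj, if_pos ((hcond _ j).2 hj), ENNReal.ofReal_mul (hmu0 j).le]
          · rw [if_neg hj, if_neg (fun hcon => hj ((hcond _ j).1 hcon)),
              ENNReal.ofReal_zero, zero_mul]
    _ ≤ ENNReal.ofReal ((Kr / (A * 2 ^ (-(k:ℝ)-1))) ^ t)
          * ENNReal.ofReal ((A * 2 ^ (-(k:ℝ))) ^ p) := mul_le_mul_left (hkb _ hak) _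
    _ = ENNReal.ofReal ((A * 2 ^ (-(k:ℝ))) ^ p * (Kr / (A * 2 ^ (-(k:ℝ)-1))) ^ t) := by
          rw [mul_comm, ← ENNReal.ofReal_mul hcap]
    _ = ENNReal.ofReal (Kr ^ p * (c ^ (2*(p-t)/t) * (2:ℝ) ^ t)) * (ENNReal.ofReal q) ^ k := by
          rw [hgeom k, ENNReal.ofReal_mul (by positivity), ENNReal.ofReal_pow hq0.le]
  have hsum : (∑' j, ENNReal.ofReal (omegaWeight a r p j ^ p * |x j| ^ p))
      ≤ ENNReal.ofReal (Kr ^ p * D) := by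
    calc ∑' j, ENNReal.ofReal (omegaWeight a r p j ^ p * |x j| ^ p)
        ≤ ∑' j, ∑' k, F j k := ENNReal.tsum_le_tsum hstep1
    _ = ∑' k : ℕ, ∑' j, F j k := ENNReal.tsum_comm
    _ ≤ ∑' k : ℕ, ENNReal.ofReal (Kr ^ p * (c ^ (2*(p-t)/t) * (2:ℝ) ^ t))
          * (ENNReal.ofReal q) ^ k := ENNReal.tsum_le_tsum hstep3
    _ = ENNReal.ofReal (Kr ^ p * (c ^ (2*(p-t)/t) * (2:ℝ) ^ t))
          * ∑' k : ℕ, (ENNReal.ofReal q) ^ k := ENNReal.tsum_mul_left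
    _ = ENNReal.ofReal (Kr ^ p * (c ^ (2*(p-t)/t) * (2:ℝ) ^ t))
          * ENNReal.ofReal ((1-q)⁻¹) := by
          rw [ENNReal.tsum_geometric, ← ENNReal.ofReal_one,
            ← ENNReal.ofReal_sub _ hq0.le, ENNReal.ofReal_inv_of_pos (by linarith)]
    _ = ENNReal.ofReal (Kr ^ p * D) := by
          rw [← ENNReal.ofReal_mul (by positivity)]
          congr 1
          rw [hD_def]
          ring
  calc wnorm (omegaWeight a r p) p x
      = (∑' j, ENNReal.ofReal (omegaWeight a r p j ^ p * |x j| ^ p)) ^ (1/p) := rfl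
  _ ≤ (ENNReal.ofReal (Kr ^ p * D)) ^ (1/p) := ENNReal.rpow_le_rpow hsum (by positivity)
  _ = ENNReal.ofReal ((Kr ^ p * D) ^ (1/p)) :=
      ENNReal.ofReal_rpow_of_nonneg (by positivity) (by positivity)
  _ = ENNReal.ofReal (Kr * M) := by
      congr 1
      rw [hM_def, Real.mul_rpow (Real.rpow_nonneg hKr0 p) hD0.le]
      congr 1
      rw [← Real.rpow_mul hKr0, mul_one_div, div_self hp0.ne', Real.rpow_one]
  _ = ENNReal.ofReal M * K := by
      rw [ENNReal.ofReal_mul hKr0, mul_comm, hKK]
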